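/- Let H be a finite-dimensional factorizable ribbon Hopf algebra, and consider H^* \otimes H^* with the action of the 'D-twist' operator: v_{D}^{-1} \triangleright (\varphi \otimes \psi) = \varphi(S^{-1}(a_j) a_k ? b_k v''^{-1} b_j) \otimes \psi(S^{-1}(a_l) S^{-1}(v'^{-1}) a_m ? b_m b_l), and the Lyubashenko operator Z(\tau_d): K \otimes K \to K \otimes K, (\varphi \otimes \psi) \mapsto \varphi(? v'^{-1}) \otimes \psi(S(v''^{-1}) ?). Then the map (F \circ S)^{\otimes 2} \circ \sigma intertwines them, i.e. (F\circ S)^{\otimes 2} \circ \sigma \circ Z(\tau_d) = v_D^{-1} \circ (F \circ S)^{\otimes 2} \circ \sigma, where F(\varphi) = \varphi(a_i ? b_i), S is the antipode acting by precomposition (S(\varphi) = \varphi \circ S), and \sigma is the flip of the two tensor factors. -/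

import Mathlib

open scoped TensorProduct
open TensorProduct

variable {k A : Type} [Field k] [Ring A] [HopfAlgebra k A]

/-- The linear map `x ↦ c x d` on `H`. -/
noncomputable def conjMap (c d : A) : A →ₗ[k] A :=
  (LinearMap.mulRight k d) ∘ₗ (LinearMap.mulLeft k c)

section Conv
variable {k C A : Type} [CommRing k] [AddCommGroup C] [Module k C] [Coalgebra k C]
  [Ring A] [Algebra k A]

/-- convolution product -/
noncomputable def conv (f g : C →ₗ[k] A) : C →ₗ[k] A :=
  LinearMap.mul' k A ∘ₗ TensorProduct.map f g ∘ₗ Coalgebra.comul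

noncomputable def convUnit : C →ₗ[k] A :=
  Algebra.linearMap k A ∘ₗ Coalgebra.counit

lemma convUnit_apply (c : C) :
    convUnit (k := k) (A := A) c = Coalgebra.counit (R := k) c • (1 : A) := by
  simp [convUnit, Algebra.smul_def]

lemma conv_apply (f g : C →ₗ[k] A) {c : C} {ρ : Type*} (r : Coalgebra.Repr k c ρ) :
    conv f g c = ∑ i ∈ r.index, f (r.left i) * g (r.right i) := by
  simp only [conv, LinearMap.comp_apply, ← r.eq, map_sum, TensorProduct.map_tmul,
    LinearMap.mul'_apply]

lemma sum_counit_smul_left {c : C} {ρ : Type*} (r : Coalgebra.Repr k c ρ) :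
    ∑ i ∈ r.index, Coalgebra.counit (R := k) (r.right i) • r.left i = c := by
  have h2 := congrArg (TensorProduct.rid k C) (Coalgebra.sum_tmul_counit_eq r)
  simp only [map_sum, TensorProduct.rid_tmul, one_smul] at h2
  exact h2

lemma sum_counit_smul_right {c : C} {ρ : Type*} (r : Coalgebra.Repr k c ρ) :
    ∑ i ∈ r.index, Coalgebra.counit (R := k) (r.left i) • r.right i = c := by
  have h2 := congrArg (TensorProduct.lid k C) (Coalgebra.sum_counit_tmul_eq r)
  simp only [map_sum, TensorProduct.lid_tmul, one_smul] at h2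
  exact h2

lemma conv_unit_right (f : C →ₗ[k] A) : conv f convUnit = f := by
  ext c
  let r := Coalgebra.Repr.arbitrary k c
  rw [conv_apply f _ r]
  have h : ∀ i ∈ r.index, f (r.left i) * convUnit (k := k) (A := A) (r.right i)
      = f (Coalgebra.counit (R := k) (r.right i) • r.left i) := by
    intro i _
    rw [convUnit_apply, map_smul, mul_smul_comm, mul_one]
  rw [Finset.sum_congr rfl h, ← map_sum, sum_counit_smul_left]

lemma conv_unit_left (f : C →ₗ[k] A) : conv convUnit f = f := by
  ext c
  let r := Coalgebra.Repr.arbitrary k c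
  rw [conv_apply _ f r]
  have h : ∀ i ∈ r.index, convUnit (k := k) (A := A) (r.left i) * f (r.right i)
      = f (Coalgebra.counit (R := k) (r.left i) • r.right i) := by
    intro i _
    rw [convUnit_apply, map_smul, smul_mul_assoc, one_mul]
  rw [Finset.sum_congr rfl h, ← map_sum, sum_counit_smul_right]

lemma conv_assoc (f g h : C →ₗ[k] A) : conv (conv f g) h = conv f (conv g h) := by
  ext c
  let r := Coalgebra.Repr.arbitrary k c
  let r₁ : ∀ i : C × C, Coalgebra.Repr k (r.left i) (C × C) := fun i => Coalgebra.Repr.arbitrary k _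
  let r₂ : ∀ i : C × C, Coalgebra.Repr k (r.right i) (C × C) := fun i => Coalgebra.Repr.arbitrary k _
  have key := Coalgebra.sum_map_tmul_tmul_eq (R := k) f g h c (repr := r) (a₁ := r₁) (a₂ := r₂)
  apply_fun (LinearMap.mul' k A ∘ₗ LinearMap.lTensor A (LinearMap.mul' k A)) at key
  simp only [map_sum, LinearMap.comp_apply, LinearMap.lTensor_tmul, LinearMap.mul'_apply] at key
  rw [conv_apply (conv f g) h r, conv_apply f (conv g h) r]
  calc ∑ i ∈ r.index, conv f g (r.left i) * h (r.right i)
      = ∑ i ∈ r.index, ∑ j ∈ (r₁ i).index,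
          f ((r₁ i).left j) * (g ((r₁ i).right j) * h (r.right i)) := by
        refine Finset.sum_congr rfl fun i _ => ?_
        rw [conv_apply f g (r₁ i), Finset.sum_mul]
        exact Finset.sum_congr rfl fun j _ => by rw [mul_assoc]
    _ = ∑ i ∈ r.index, ∑ j ∈ (r₂ i).index,
          f (r.left i) * (g ((r₂ i).left j) * h ((r₂ i).right j)) := key.symm
    _ = ∑ i ∈ r.index, f (r.left i) * conv g h (r.right i) := by
        refine Finset.sum_congr rfl fun i _ => ?_
        rw [conv_apply g h (r₂ i), Finset.mul_sum]

end Conv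

section Anti
variable {k A : Type} [Field k] [Ring A] [HopfAlgebra k A]

open Coalgebra HopfAlgebra

/-- Repr of a pure tensor in `A ⊗ A` from Reprs of the factors. -/
noncomputable def reprTmul {x y : A} {ρ τ : Type*} (rx : Coalgebra.Repr k x ρ)
    (ry : Coalgebra.Repr k y τ) :
    Coalgebra.Repr k (x ⊗ₜ[k] y) (ρ × τ) where
  index := rx.index ×ˢ ry.index
  left := fun p => rx.left p.1 ⊗ₜ[k] ry.left p.2
  right := fun p => rx.right p.1 ⊗ₜ[k] ry.right p.2
  eq := by
    have : Coalgebra.comul (R := k) (x ⊗ₜ[k] y) =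
        TensorProduct.tensorTensorTensorComm k A A A A
          (Coalgebra.comul (R := k) x ⊗ₜ Coalgebra.comul (R := k) y) := by
      simp [TensorProduct.comul_tmul, TensorProduct.AlgebraTensorModule.tensorTensorTensorComm_eq]
    rw [this, ← rx.eq, ← ry.eq]
    simp only [TensorProduct.sum_tmul, TensorProduct.tmul_sum, map_sum,
      TensorProduct.tensorTensorTensorComm_tmul]
    rw [Finset.sum_product]
    exact Finset.sum_comm

/-- Repr of a product from Reprs of the factors. -/
noncomputable def reprMul {x y : A} {ρ τ : Type*} (rx : Coalgebra.Repr k x ρ)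
    (ry : Coalgebra.Repr k y τ) :
    Coalgebra.Repr k (x * y) (ρ × τ) where
  index := rx.index ×ˢ ry.index
  left := fun p => rx.left p.1 * ry.left p.2
  right := fun p => rx.right p.1 * ry.right p.2
  eq := by
    rw [Bialgebra.comul_mul, ← rx.eq, ← ry.eq, Finset.sum_mul_sum]
    simp only [Algebra.TensorProduct.tmul_mul_tmul]
    rw [Finset.sum_product]

noncomputable def SM : A ⊗[k] A →ₗ[k] A :=
  HopfAlgebra.antipode (R := k) ∘ₗ LinearMap.mul' k A

noncomputable def Fm : A ⊗[k] A →ₗ[k] A :=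
  LinearMap.mul' k A ∘ₗ TensorProduct.map (HopfAlgebra.antipode (R := k))
    (HopfAlgebra.antipode (R := k)) ∘ₗ (TensorProduct.comm k A A).toLinearMap

lemma counit_tmul' (x y : A) : Coalgebra.counit (R := k) (x ⊗ₜ[k] y) =
    Coalgebra.counit (R := k) x * Coalgebra.counit (R := k) y := by
  simp [mul_comm]

lemma conv_SM_mul : conv (SM (k := k) (A := A)) (LinearMap.mul' k A) = convUnit := by
  apply TensorProduct.ext'
  intro x y
  let rx := Coalgebra.Repr.arbitrary k x
  let ry := Coalgebra.Repr.arbitrary k y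
  rw [conv_apply _ _ (reprTmul rx ry), convUnit_apply, counit_tmul']
  have : ∀ p ∈ (reprTmul rx ry).index,
      SM (k := k) ((reprTmul rx ry).left p) * LinearMap.mul' k A ((reprTmul rx ry).right p)
      = HopfAlgebra.antipode (R := k) ((reprMul rx ry).left p) * ((reprMul rx ry).right p) := by
    intro p _
    simp [reprTmul, reprMul, SM]
  rw [Finset.sum_congr rfl this, ← Bialgebra.counit_mul]
  exact HopfAlgebra.sum_antipode_mul_eq_smul (reprMul rx ry)

lemma conv_mul_Fm : conv (LinearMap.mul' k A) (Fm (k := k) (A := A)) = convUnit := by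
  apply TensorProduct.ext'
  intro x y
  let rx := Coalgebra.Repr.arbitrary k x
  let ry := Coalgebra.Repr.arbitrary k y
  rw [conv_apply _ _ (reprTmul rx ry), convUnit_apply, counit_tmul']
  have : ∀ p ∈ (reprTmul rx ry).index,
      LinearMap.mul' k A ((reprTmul rx ry).left p) * Fm (k := k) ((reprTmul rx ry).right p)
      = rx.left p.1 * ((ry.left p.2 * HopfAlgebra.antipode (R := k) (ry.right p.2)) *
          HopfAlgebra.antipode (R := k) (rx.right p.1)) := by
    intro p _
    simp only [reprTmul, Fm, LinearMap.comp_apply, LinearEquiv.coe_coe, TensorProduct.comm_tmul,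
      TensorProduct.map_tmul, LinearMap.mul'_apply]
    rw [mul_assoc, mul_assoc]
  rw [Finset.sum_congr rfl this]
  rw [show (∑ p ∈ (reprTmul rx ry).index,
      rx.left p.1 * ((ry.left p.2 * HopfAlgebra.antipode (R := k) (ry.right p.2)) *
          HopfAlgebra.antipode (R := k) (rx.right p.1)))
    = ∑ i ∈ rx.index, ∑ j ∈ ry.index,
      rx.left i * ((ry.left j * HopfAlgebra.antipode (R := k) (ry.right j)) *
          HopfAlgebra.antipode (R := k) (rx.right i)) from Finset.sum_product _ _ _]
  have : ∀ i ∈ rx.index, ∑ j ∈ ry.index,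
      rx.left i * ((ry.left j * HopfAlgebra.antipode (R := k) (ry.right j)) *
        HopfAlgebra.antipode (R := k) (rx.right i))
      = Coalgebra.counit (R := k) y •
          (rx.left i * HopfAlgebra.antipode (R := k) (rx.right i)) := by
    intro i _
    rw [← Finset.mul_sum, ← Finset.sum_mul, HopfAlgebra.sum_mul_antipode_eq_smul ry]
    rw [smul_mul_assoc, one_mul, mul_smul_comm]
  rw [Finset.sum_congr rfl this, ← Finset.smul_sum,
    HopfAlgebra.sum_mul_antipode_eq_smul rx, smul_smul, mul_comm]

theorem antipode_mul' (x y : A) :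
    HopfAlgebra.antipode (R := k) (x * y)
      = HopfAlgebra.antipode (R := k) y * HopfAlgebra.antipode (R := k) x := by
  have h : SM (k := k) (A := A) = Fm := by
    calc SM (k := k) (A := A) = conv SM convUnit := (conv_unit_right _).symm
      _ = conv SM (conv (LinearMap.mul' k A) Fm) := by rw [conv_mul_Fm]
      _ = conv (conv SM (LinearMap.mul' k A)) Fm := (conv_assoc _ _ _).symm
      _ = conv convUnit Fm := by rw [conv_SM_mul]
      _ = Fm := conv_unit_left _
  have := LinearMap.congr_fun h (x ⊗ₜ[k] y)
  simpa [SM, Fm] using this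

theorem antipode_one' : HopfAlgebra.antipode (R := k) (1 : A) = 1 := by
  have h := HopfAlgebra.mul_antipode_rTensor_comul_apply (R := k) (1 : A)
  have h1 : Coalgebra.comul (R := k) (1 : A) = (1 : A) ⊗ₜ[k] 1 := by
    simpa [Algebra.TensorProduct.one_def] using map_one (Bialgebra.comulAlgHom k A)
  have h2 : Coalgebra.counit (R := k) (1 : A) = 1 := map_one (Bialgebra.counitAlgHom k A)
  rw [h1, h2] at h
  simpa using h

end Anti

section RMat
variable {k A : Type} [Field k] [Ring A] [HopfAlgebra k A]
variable {ι : Type} [Fintype ι] (a b : ι → A)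

local notation "𝑺" => HopfAlgebra.antipode (R := k) (A := A)
local notation "ε" => Coalgebra.counit (R := k) (A := A)

variable (hex1 : (∑ i, (Coalgebra.comul (R := k) (a i)) ⊗ₜ[k] b i : (A ⊗[k] A) ⊗[k] A)
        = (∑ i, (a i ⊗ₜ[k] (1:A)) ⊗ₜ[k] b i) * (∑ i, ((1:A) ⊗ₜ[k] a i) ⊗ₜ[k] b i))
variable (hex2 : (∑ i, a i ⊗ₜ[k] (Coalgebra.comul (R := k) (b i)) : A ⊗[k] (A ⊗[k] A))
        = (∑ i, a i ⊗ₜ[k] ((1:A) ⊗ₜ[k] b i)) * (∑ i, a i ⊗ₜ[k] (b i ⊗ₜ[k] (1:A))))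
variable (hRunit : IsUnit (∑ i, a i ⊗ₜ[k] b i))
include hex1 in
lemma hex1_expand : (∑ i, (Coalgebra.comul (R := k) (a i)) ⊗ₜ[k] b i : (A ⊗[k] A) ⊗[k] A)
    = ∑ i, ∑ l, (a i ⊗ₜ[k] a l) ⊗ₜ[k] (b i * b l) := by
  rw [hex1, Finset.sum_mul_sum]
  simp [Algebra.TensorProduct.tmul_mul_tmul]

include hex2 in
lemma hex2_expand : (∑ i, a i ⊗ₜ[k] (Coalgebra.comul (R := k) (b i)) : A ⊗[k] (A ⊗[k] A))
    = ∑ i, ∑ l, (a i * a l) ⊗ₜ[k] (b l ⊗ₜ[k] b i) := by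
  rw [hex2, Finset.sum_mul_sum]
  simp [Algebra.TensorProduct.tmul_mul_tmul]

include hex1 hRunit in
/-- `(ε ⊗ id) R = 1` -/
lemma unit_eps_left :
    (1:A) ⊗ₜ[k] (∑ i, ε (a i) • b i) = (1:A) ⊗ₜ[k] (1:A) := by
  classical
  -- apply (ε-collapse on first leg of the first factor) ⊗ id to hex1
  set g : A ⊗[k] A →ₗ[k] A :=
    (TensorProduct.lid k A).toLinearMap ∘ₗ LinearMap.rTensor A (Coalgebra.counit (R := k)) with hg
  have happ := congrArg (TensorProduct.map g (LinearMap.id (R := k) (M := A)))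
    (hex1_expand a b hex1)
  simp only [map_sum, TensorProduct.map_tmul, LinearMap.id_coe, id_eq] at happ
  have hgΔ : ∀ x : A, g (Coalgebra.comul (R := k) x) = x := by
    intro x
    simp [hg, Coalgebra.rTensor_counit_comul]
  have hgt : ∀ x y : A, g (x ⊗ₜ[k] y) = ε x • y := by
    intro x y; simp [hg]
  rw [Finset.sum_congr rfl (fun i _ => by rw [hgΔ])] at happ
  rw [Finset.sum_congr rfl (fun i _ => Finset.sum_congr rfl (fun l _ => by rw [hgt]))] at happ
  -- happ : ∑ i, a i ⊗ₜ b i = ∑ i, ∑ l, (ε (a i) • a l) ⊗ₜ (b i * b l)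
  have h2 : (∑ i, ∑ l, (ε (a i) • a l) ⊗ₜ[k] (b i * b l) : A ⊗[k] A)
      = ((1:A) ⊗ₜ[k] (∑ i, ε (a i) • b i)) * (∑ l, a l ⊗ₜ[k] b l) := by
    rw [TensorProduct.tmul_sum, Finset.sum_mul_sum]
    refine Finset.sum_congr rfl (fun i _ => Finset.sum_congr rfl (fun l _ => ?_))
    simp [Algebra.TensorProduct.tmul_mul_tmul, smul_mul_assoc, mul_smul_comm,
      TensorProduct.tmul_smul, TensorProduct.smul_tmul']
  rw [h2] at happ
  -- happ : R = (1 ⊗ u) * R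
  have hu := happ.symm
  calc (1:A) ⊗ₜ[k] (∑ i, ε (a i) • b i)
      = (((1:A) ⊗ₜ[k] (∑ i, ε (a i) • b i)) * (∑ i, a i ⊗ₜ[k] b i)) * ↑hRunit.unit⁻¹ := by
        rw [mul_assoc, IsUnit.mul_val_inv, mul_one]
    _ = (∑ i, a i ⊗ₜ[k] b i) * ↑hRunit.unit⁻¹ := by rw [hu]
    _ = (1:A) ⊗ₜ[k] (1:A) := by
        rw [IsUnit.mul_val_inv, Algebra.TensorProduct.one_def]

include hex2 hRunit in
/-- `(id ⊗ ε) R = 1` -/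
lemma unit_eps_right :
    (∑ i, ε (b i) • a i) ⊗ₜ[k] (1:A) = (1:A) ⊗ₜ[k] (1:A) := by
  classical
  set g : A ⊗[k] A →ₗ[k] A :=
    (TensorProduct.rid k A).toLinearMap ∘ₗ LinearMap.lTensor A (Coalgebra.counit (R := k)) with hg
  have happ := congrArg (TensorProduct.map (LinearMap.id (R := k) (M := A)) g)
    (hex2_expand a b hex2)
  simp only [map_sum, TensorProduct.map_tmul, LinearMap.id_coe, id_eq] at happ
  have hgΔ : ∀ x : A, g (Coalgebra.comul (R := k) x) = x := by
    intro x; simp [hg, Coalgebra.lTensor_counit_comul]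
  have hgt : ∀ x y : A, g (x ⊗ₜ[k] y) = ε y • x := by
    intro x y; simp [hg]
  rw [Finset.sum_congr rfl (fun i _ => by rw [hgΔ])] at happ
  rw [Finset.sum_congr rfl (fun i _ => Finset.sum_congr rfl (fun l _ => by rw [hgt]))] at happ
  -- happ : R = ∑ i, ∑ l, (a i * a l) ⊗ₜ (ε (b i) • b l)
  have h2 : (∑ i, ∑ l, (a i * a l) ⊗ₜ[k] (ε (b i) • b l) : A ⊗[k] A)
      = ((∑ i, ε (b i) • a i) ⊗ₜ[k] (1:A)) * (∑ l, a l ⊗ₜ[k] b l) := by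
    rw [TensorProduct.sum_tmul, Finset.sum_mul_sum]
    refine Finset.sum_congr rfl (fun i _ => Finset.sum_congr rfl (fun l _ => ?_))
    simp [Algebra.TensorProduct.tmul_mul_tmul, smul_mul_assoc, mul_smul_comm,
      TensorProduct.tmul_smul, TensorProduct.smul_tmul']
  rw [h2] at happ
  have hu := happ.symm
  calc (∑ i, ε (b i) • a i) ⊗ₜ[k] (1:A)
      = (((∑ i, ε (b i) • a i) ⊗ₜ[k] (1:A)) * (∑ i, a i ⊗ₜ[k] b i)) * ↑hRunit.unit⁻¹ := by
        rw [mul_assoc, IsUnit.mul_val_inv, mul_one]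
    _ = (∑ i, a i ⊗ₜ[k] b i) * ↑hRunit.unit⁻¹ := by rw [hu]
    _ = (1:A) ⊗ₜ[k] (1:A) := by
        rw [IsUnit.mul_val_inv, Algebra.TensorProduct.one_def]

include hex1 hRunit in
/-- `((S ⊗ id) R) * R = 1` -/
lemma SaR_mul_R :
    (∑ i, 𝑺 (a i) ⊗ₜ[k] b i) * (∑ i, a i ⊗ₜ[k] b i) = 1 := by
  classical
  set g : A ⊗[k] A →ₗ[k] A := LinearMap.mul' k A ∘ₗ LinearMap.rTensor A 𝑺 with hg
  have happ := congrArg (TensorProduct.map g (LinearMap.id (R := k) (M := A)))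
    (hex1_expand a b hex1)
  simp only [map_sum, TensorProduct.map_tmul, LinearMap.id_coe, id_eq] at happ
  have hgΔ : ∀ x : A, g (Coalgebra.comul (R := k) x) = ε x • 1 := by
    intro x
    simp only [hg, LinearMap.comp_apply, HopfAlgebra.mul_antipode_rTensor_comul_apply,
      Algebra.smul_def, mul_one]
  have hgt : ∀ x y : A, g (x ⊗ₜ[k] y) = 𝑺 x * y := by
    intro x y; simp [hg]
  rw [Finset.sum_congr rfl (fun i _ => by rw [hgΔ])] at happ
  rw [Finset.sum_congr rfl (fun i _ => Finset.sum_congr rfl (fun l _ => by rw [hgt]))] at happ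
  -- happ : ∑ i, (ε (a i) • 1) ⊗ₜ b i = ∑ i, ∑ l, (S (a i) * a l) ⊗ₜ (b i * b l)
  have hL : (∑ i, ((ε (a i) • (1:A)) ⊗ₜ[k] b i) : A ⊗[k] A)
      = (1:A) ⊗ₜ[k] (∑ i, ε (a i) • b i) := by
    rw [TensorProduct.tmul_sum]
    exact Finset.sum_congr rfl fun i _ => by
      rw [TensorProduct.smul_tmul, TensorProduct.tmul_smul]
  have hR : (∑ i, ∑ l, (𝑺 (a i) * a l) ⊗ₜ[k] (b i * b l) : A ⊗[k] A)
      = (∑ i, 𝑺 (a i) ⊗ₜ[k] b i) * (∑ i, a i ⊗ₜ[k] b i) := by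
    rw [Finset.sum_mul_sum]
    simp [Algebra.TensorProduct.tmul_mul_tmul]
  rw [hL, hR, unit_eps_left a b hex1 hRunit, ← Algebra.TensorProduct.one_def] at happ
  exact happ.symm

include hex1 hRunit in
/-- `R * ((S ⊗ id) R) = 1` -/
lemma R_mul_SaR :
    (∑ i, a i ⊗ₜ[k] b i) * (∑ i, 𝑺 (a i) ⊗ₜ[k] b i) = 1 := by
  classical
  set g : A ⊗[k] A →ₗ[k] A := LinearMap.mul' k A ∘ₗ LinearMap.lTensor A 𝑺 with hg
  have happ := congrArg (TensorProduct.map g (LinearMap.id (R := k) (M := A)))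
    (hex1_expand a b hex1)
  simp only [map_sum, TensorProduct.map_tmul, LinearMap.id_coe, id_eq] at happ
  have hgΔ : ∀ x : A, g (Coalgebra.comul (R := k) x) = ε x • 1 := by
    intro x
    simp only [hg, LinearMap.comp_apply, HopfAlgebra.mul_antipode_lTensor_comul_apply,
      Algebra.smul_def, mul_one]
  have hgt : ∀ x y : A, g (x ⊗ₜ[k] y) = x * 𝑺 y := by
    intro x y; simp [hg]
  rw [Finset.sum_congr rfl (fun i _ => by rw [hgΔ])] at happ
  rw [Finset.sum_congr rfl (fun i _ => Finset.sum_congr rfl (fun l _ => by rw [hgt]))] at happ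
  have hL : (∑ i, ((ε (a i) • (1:A)) ⊗ₜ[k] b i) : A ⊗[k] A)
      = (1:A) ⊗ₜ[k] (∑ i, ε (a i) • b i) := by
    rw [TensorProduct.tmul_sum]
    exact Finset.sum_congr rfl fun i _ => by
      rw [TensorProduct.smul_tmul, TensorProduct.tmul_smul]
  have hR : (∑ i, ∑ l, (a i * 𝑺 (a l)) ⊗ₜ[k] (b i * b l) : A ⊗[k] A)
      = (∑ i, a i ⊗ₜ[k] b i) * (∑ i, 𝑺 (a i) ⊗ₜ[k] b i) := by
    rw [Finset.sum_mul_sum]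
    simp [Algebra.TensorProduct.tmul_mul_tmul]
  rw [hL, hR, unit_eps_left a b hex1 hRunit, ← Algebra.TensorProduct.one_def] at happ
  exact happ.symm

variable (Sinv : A →ₗ[k] A)

lemma Sinv_one (hS1 : ∀ x : A, Sinv (𝑺 x) = x) : Sinv 1 = 1 := by
  have h := hS1 1
  rwa [antipode_one'] at h

lemma Sinv_mul (hS1 : ∀ x : A, Sinv (𝑺 x) = x) (hS2 : ∀ x : A, 𝑺 (Sinv x) = x) (u v : A) :
    Sinv (u * v) = Sinv v * Sinv u := by
  have h : u * v = 𝑺 (Sinv v * Sinv u) := by rw [antipode_mul', hS2, hS2]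
  rw [h, hS1]

lemma sum_Sinv_right_mul_left (hS1 : ∀ x : A, Sinv (𝑺 x) = x)
    (hS2 : ∀ x : A, 𝑺 (Sinv x) = x) {x : A} {ρ : Type*} (r : Coalgebra.Repr k x ρ) :
    ∑ i ∈ r.index, Sinv (r.right i) * r.left i = ε x • 1 := by
  have h0 := congrArg Sinv (HopfAlgebra.sum_antipode_mul_eq_smul (R := k) r)
  rw [map_sum, map_smul, Sinv_one Sinv hS1] at h0
  rw [← h0]
  refine Finset.sum_congr rfl fun i _ => ?_
  rw [Sinv_mul Sinv hS1 hS2, hS1]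

/-- `((id ⊗ S⁻¹) R) * R = 1` -/
lemma TR_mul_R (hS1 : ∀ x : A, Sinv (𝑺 x) = x) (hS2 : ∀ x : A, 𝑺 (Sinv x) = x)
    (hex2 : (∑ i, a i ⊗ₜ[k] (Coalgebra.comul (R := k) (b i)) : A ⊗[k] (A ⊗[k] A))
        = (∑ i, a i ⊗ₜ[k] ((1:A) ⊗ₜ[k] b i)) * (∑ i, a i ⊗ₜ[k] (b i ⊗ₜ[k] (1:A))))
    (hRunit : IsUnit (∑ i, a i ⊗ₜ[k] b i)) :
    (∑ i, a i ⊗ₜ[k] Sinv (b i)) * (∑ i, a i ⊗ₜ[k] b i) = 1 := by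
  classical
  set g : A ⊗[k] A →ₗ[k] A :=
    LinearMap.mul' k A ∘ₗ LinearMap.rTensor A Sinv ∘ₗ (TensorProduct.comm k A A).toLinearMap
    with hg
  have happ := congrArg (LinearMap.lTensor A g) (hex2_expand a b hex2)
  simp only [map_sum, LinearMap.lTensor_tmul] at happ
  have hgΔ : ∀ x : A, g (Coalgebra.comul (R := k) x) = ε x • 1 := by
    intro x
    let r := Coalgebra.Repr.arbitrary k x
    rw [← r.eq, map_sum]
    have : ∀ i ∈ r.index, g (r.left i ⊗ₜ[k] r.right i) = Sinv (r.right i) * r.left i := by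
      intro i _; simp [hg]
    rw [Finset.sum_congr rfl this, sum_Sinv_right_mul_left Sinv hS1 hS2 r]
  have hgt : ∀ x y : A, g (x ⊗ₜ[k] y) = Sinv y * x := by
    intro x y; simp [hg]
  rw [Finset.sum_congr rfl (fun i _ => by rw [hgΔ])] at happ
  rw [Finset.sum_congr rfl (fun i _ => Finset.sum_congr rfl (fun l _ => by rw [hgt]))] at happ
  -- happ : ∑ i, a i ⊗ₜ (ε (b i) • 1) = ∑ i, ∑ l, (a i * a l) ⊗ₜ (Sinv (b i) * b l)
  have hL : (∑ i, a i ⊗ₜ[k] (ε (b i) • (1:A)) : A ⊗[k] A)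
      = (∑ i, ε (b i) • a i) ⊗ₜ[k] (1:A) := by
    rw [TensorProduct.sum_tmul]
    exact Finset.sum_congr rfl fun i _ => by
      rw [TensorProduct.tmul_smul, TensorProduct.smul_tmul']
  have hR : (∑ i, ∑ l, (a i * a l) ⊗ₜ[k] (Sinv (b i) * b l) : A ⊗[k] A)
      = (∑ i, a i ⊗ₜ[k] Sinv (b i)) * (∑ i, a i ⊗ₜ[k] b i) := by
    rw [Finset.sum_mul_sum]
    simp [Algebra.TensorProduct.tmul_mul_tmul]
  rw [hL, hR, unit_eps_right a b hex2 hRunit, ← Algebra.TensorProduct.one_def] at happ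
  exact happ.symm

/-- `(S ⊗ S) R = R` -/
lemma SS_R (hS1 : ∀ x : A, Sinv (𝑺 x) = x) (hS2 : ∀ x : A, 𝑺 (Sinv x) = x)
    (hex1 : (∑ i, (Coalgebra.comul (R := k) (a i)) ⊗ₜ[k] b i : (A ⊗[k] A) ⊗[k] A)
        = (∑ i, (a i ⊗ₜ[k] (1:A)) ⊗ₜ[k] b i) * (∑ i, ((1:A) ⊗ₜ[k] a i) ⊗ₜ[k] b i))
    (hex2 : (∑ i, a i ⊗ₜ[k] (Coalgebra.comul (R := k) (b i)) : A ⊗[k] (A ⊗[k] A))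
        = (∑ i, a i ⊗ₜ[k] ((1:A) ⊗ₜ[k] b i)) * (∑ i, a i ⊗ₜ[k] (b i ⊗ₜ[k] (1:A))))
    (hRunit : IsUnit (∑ i, a i ⊗ₜ[k] b i)) :
    (∑ i, 𝑺 (a i) ⊗ₜ[k] 𝑺 (b i)) = ∑ i, a i ⊗ₜ[k] b i := by
  have hQ := SaR_mul_R a b hex1 hRunit
  have hQ' := R_mul_SaR a b hex1 hRunit
  have hT := TR_mul_R a b Sinv hS1 hS2 hex2 hRunit
  have hTQ : (∑ i, a i ⊗ₜ[k] Sinv (b i)) = ∑ i, 𝑺 (a i) ⊗ₜ[k] b i := by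
    calc (∑ i, a i ⊗ₜ[k] Sinv (b i))
        = (∑ i, a i ⊗ₜ[k] Sinv (b i)) *
            ((∑ i, a i ⊗ₜ[k] b i) * (∑ i, 𝑺 (a i) ⊗ₜ[k] b i)) := by rw [hQ', mul_one]
      _ = ((∑ i, a i ⊗ₜ[k] Sinv (b i)) * (∑ i, a i ⊗ₜ[k] b i)) *
            (∑ i, 𝑺 (a i) ⊗ₜ[k] b i) := by rw [mul_assoc]
      _ = ∑ i, 𝑺 (a i) ⊗ₜ[k] b i := by rw [hT, one_mul]
  have h2 := congrArg (LinearMap.lTensor A 𝑺) hTQ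
  simp only [map_sum, LinearMap.lTensor_tmul, hS2] at h2
  exact h2.symm

/-- swapped version: `∑ S(b i) ⊗ S(a i) = ∑ b i ⊗ a i` -/
lemma SS_R_swap (hS1 : ∀ x : A, Sinv (𝑺 x) = x) (hS2 : ∀ x : A, 𝑺 (Sinv x) = x)
    (hex1 : (∑ i, (Coalgebra.comul (R := k) (a i)) ⊗ₜ[k] b i : (A ⊗[k] A) ⊗[k] A)
        = (∑ i, (a i ⊗ₜ[k] (1:A)) ⊗ₜ[k] b i) * (∑ i, ((1:A) ⊗ₜ[k] a i) ⊗ₜ[k] b i))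
    (hex2 : (∑ i, a i ⊗ₜ[k] (Coalgebra.comul (R := k) (b i)) : A ⊗[k] (A ⊗[k] A))
        = (∑ i, a i ⊗ₜ[k] ((1:A) ⊗ₜ[k] b i)) * (∑ i, a i ⊗ₜ[k] (b i ⊗ₜ[k] (1:A))))
    (hRunit : IsUnit (∑ i, a i ⊗ₜ[k] b i)) :
    (∑ i, 𝑺 (b i) ⊗ₜ[k] 𝑺 (a i)) = ∑ i, b i ⊗ₜ[k] a i := by
  have h := congrArg (TensorProduct.comm k A A) (SS_R a b Sinv hS1 hS2 hex1 hex2 hRunit)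
  simpa [map_sum] using h

/-- the key identity `E = 1 ⊗ 1` -/
lemma E_one (hS1 : ∀ x : A, Sinv (𝑺 x) = x) (hS2 : ∀ x : A, 𝑺 (Sinv x) = x)
    (hex1 : (∑ i, (Coalgebra.comul (R := k) (a i)) ⊗ₜ[k] b i : (A ⊗[k] A) ⊗[k] A)
        = (∑ i, (a i ⊗ₜ[k] (1:A)) ⊗ₜ[k] b i) * (∑ i, ((1:A) ⊗ₜ[k] a i) ⊗ₜ[k] b i))
    (hex2 : (∑ i, a i ⊗ₜ[k] (Coalgebra.comul (R := k) (b i)) : A ⊗[k] (A ⊗[k] A))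
        = (∑ i, a i ⊗ₜ[k] ((1:A) ⊗ₜ[k] b i)) * (∑ i, a i ⊗ₜ[k] (b i ⊗ₜ[k] (1:A))))
    (hRunit : IsUnit (∑ i, a i ⊗ₜ[k] b i)) :
    (∑ i, ∑ l, (b i * 𝑺 (b l)) ⊗ₜ[k] (a l * a i) : A ⊗[k] A) = (1:A) ⊗ₜ[k] 1 := by
  classical
  -- the algebra morphism χ : A ⊗ A → A ⊗ Aᵐᵒᵖ, x ⊗ y ↦ x ⊗ op (S⁻¹ y)
  let σopL : A →ₗ[k] Aᵐᵒᵖ := (MulOpposite.opLinearEquiv k (M := A)).toLinearMap ∘ₗ Sinv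
  have hσopL : ∀ x : A, σopL x = MulOpposite.op (Sinv x) := fun x => rfl
  let σop : A →ₐ[k] Aᵐᵒᵖ := AlgHom.ofLinearMap σopL
    (by rw [hσopL, Sinv_one Sinv hS1, MulOpposite.op_one])
    (fun u v => by
      rw [hσopL, hσopL, hσopL, Sinv_mul Sinv hS1 hS2, MulOpposite.op_mul])
  have hσop : ∀ x : A, σop x = MulOpposite.op (Sinv x) := fun x => rfl
  let χ : A ⊗[k] A →ₐ[k] A ⊗[k] Aᵐᵒᵖ := Algebra.TensorProduct.map (AlgHom.id k A) σop
  -- χ images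
  have h1 : χ (∑ i, b i ⊗ₜ[k] 𝑺 (a i)) = ∑ i, b i ⊗ₜ[k] MulOpposite.op (a i) := by
    rw [map_sum]
    exact Finset.sum_congr rfl fun i _ => by
      show (b i) ⊗ₜ[k] (σop (𝑺 (a i))) = _
      rw [hσop, hS1]
  have h2 : χ (∑ i, 𝑺 (b i) ⊗ₜ[k] 𝑺 (a i)) = ∑ i, 𝑺 (b i) ⊗ₜ[k] MulOpposite.op (a i) := by
    rw [map_sum]
    exact Finset.sum_congr rfl fun i _ => by
      show (𝑺 (b i)) ⊗ₜ[k] (σop (𝑺 (a i))) = _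
      rw [hσop, hS1]
  -- comm images
  have hcq : (Algebra.TensorProduct.comm k A A) (∑ i, 𝑺 (a i) ⊗ₜ[k] b i)
      = ∑ i, b i ⊗ₜ[k] 𝑺 (a i) := by simp [map_sum]
  have hcr : (Algebra.TensorProduct.comm k A A) (∑ i, a i ⊗ₜ[k] b i)
      = ∑ i, b i ⊗ₜ[k] a i := by simp [map_sum]
  -- the product identity in A ⊗ Aᵐᵒᵖ
  have hprod : (∑ i, b i ⊗ₜ[k] MulOpposite.op (a i)) *
      (∑ i, 𝑺 (b i) ⊗ₜ[k] MulOpposite.op (a i)) = 1 := by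
    rw [← h1, ← h2, ← map_mul]
    have : (∑ i, b i ⊗ₜ[k] 𝑺 (a i)) * (∑ i, 𝑺 (b i) ⊗ₜ[k] 𝑺 (a i)) = 1 := by
      rw [SS_R_swap a b Sinv hS1 hS2 hex1 hex2 hRunit, ← hcq, ← hcr, ← map_mul,
        SaR_mul_R a b hex1 hRunit, map_one]
    rw [this, map_one]
  -- transfer back along the linear equivalence id ⊗ op
  rw [Finset.sum_mul_sum] at hprod
  simp only [Algebra.TensorProduct.tmul_mul_tmul, ← MulOpposite.op_mul] at hprod
  rw [Algebra.TensorProduct.one_def] at hprod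
  have hj := congrArg
    (TensorProduct.congr (LinearEquiv.refl k A) ((MulOpposite.opLinearEquiv k (M := A)).symm))
    hprod
  simp only [map_sum, TensorProduct.congr_tmul, LinearEquiv.refl_apply,
    MulOpposite.coe_opLinearEquiv_symm, MulOpposite.unop_op, MulOpposite.unop_one] at hj
  exact hj

/-- conjugation by `E'` is the identity -/
lemma conj_id (hS1 : ∀ x : A, Sinv (𝑺 x) = x) (hS2 : ∀ x : A, 𝑺 (Sinv x) = x)
    (hex1 : (∑ i, (Coalgebra.comul (R := k) (a i)) ⊗ₜ[k] b i : (A ⊗[k] A) ⊗[k] A)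
        = (∑ i, (a i ⊗ₜ[k] (1:A)) ⊗ₜ[k] b i) * (∑ i, ((1:A) ⊗ₜ[k] a i) ⊗ₜ[k] b i))
    (hex2 : (∑ i, a i ⊗ₜ[k] (Coalgebra.comul (R := k) (b i)) : A ⊗[k] (A ⊗[k] A))
        = (∑ i, a i ⊗ₜ[k] ((1:A) ⊗ₜ[k] b i)) * (∑ i, a i ⊗ₜ[k] (b i ⊗ₜ[k] (1:A))))
    (hRunit : IsUnit (∑ i, a i ⊗ₜ[k] b i)) (Z : A) :
    ∑ i, ∑ l, 𝑺 (b i) * 𝑺 (b l) * Z * (a l * 𝑺 (a i)) = Z := by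
  classical
  -- first, E' = 1 ⊗ 1
  let β : A ⊗[k] A →ₗ[k] A ⊗[k] A :=
    ∑ l, TensorProduct.map (LinearMap.mulRight k (𝑺 (b l))) (LinearMap.mulLeft k (a l))
  have hβ : ∀ u w : A, β (u ⊗ₜ[k] w) = ∑ l, (u * 𝑺 (b l)) ⊗ₜ[k] (a l * w) := by
    intro u w
    simp [β, LinearMap.sum_apply]
  have hE' : (∑ i, ∑ l, (𝑺 (b i) * 𝑺 (b l)) ⊗ₜ[k] (a l * 𝑺 (a i)) : A ⊗[k] A)
      = (1:A) ⊗ₜ[k] 1 := by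
    have hb1 : β (∑ i, 𝑺 (b i) ⊗ₜ[k] 𝑺 (a i)) =
        ∑ i, ∑ l, (𝑺 (b i) * 𝑺 (b l)) ⊗ₜ[k] (a l * 𝑺 (a i)) := by
      rw [map_sum]
      exact Finset.sum_congr rfl fun i _ => hβ _ _
    have hb2 : β (∑ i, b i ⊗ₜ[k] a i) =
        ∑ i, ∑ l, (b i * 𝑺 (b l)) ⊗ₜ[k] (a l * a i) := by
      rw [map_sum]
      exact Finset.sum_congr rfl fun i _ => hβ _ _
    rw [← hb1, SS_R_swap a b Sinv hS1 hS2 hex1 hex2 hRunit, hb2,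
      E_one a b Sinv hS1 hS2 hex1 hex2 hRunit]
  -- now conjugate Z
  let γ : A ⊗[k] A →ₗ[k] A :=
    LinearMap.mul' k A ∘ₗ LinearMap.rTensor A (LinearMap.mulRight k Z)
  have hγ : ∀ u w : A, γ (u ⊗ₜ[k] w) = u * Z * w := by
    intro u w; simp [γ]
  have := congrArg γ hE'
  simp only [map_sum, hγ] at this
  rw [one_mul, mul_one] at this
  exact this


lemma sum_rot {M : Type} [AddCommMonoid M] (f : ι → ι → ι → M) :
    ∑ j2 : ι, ∑ kk : ι, ∑ i : ι, f j2 kk i = ∑ i : ι, ∑ j2 : ι, ∑ kk : ι, f j2 kk i := by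
  calc ∑ j2 : ι, ∑ kk : ι, ∑ i : ι, f j2 kk i
      = ∑ j2 : ι, ∑ i : ι, ∑ kk : ι, f j2 kk i :=
        Finset.sum_congr rfl fun j2 _ => Finset.sum_comm
    _ = ∑ i : ι, ∑ j2 : ι, ∑ kk : ι, f j2 kk i := Finset.sum_comm

lemma L1' (hS1 : ∀ x : A, Sinv (𝑺 x) = x) (hS2 : ∀ x : A, 𝑺 (Sinv x) = x)
    (hex1 : (∑ i, (Coalgebra.comul (R := k) (a i)) ⊗ₜ[k] b i : (A ⊗[k] A) ⊗[k] A)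
        = (∑ i, (a i ⊗ₜ[k] (1:A)) ⊗ₜ[k] b i) * (∑ i, ((1:A) ⊗ₜ[k] a i) ⊗ₜ[k] b i))
    (hex2 : (∑ i, a i ⊗ₜ[k] (Coalgebra.comul (R := k) (b i)) : A ⊗[k] (A ⊗[k] A))
        = (∑ i, a i ⊗ₜ[k] ((1:A) ⊗ₜ[k] b i)) * (∑ i, a i ⊗ₜ[k] (b i ⊗ₜ[k] (1:A))))
    (hRunit : IsUnit (∑ i, a i ⊗ₜ[k] b i)) (c x : A) :
    ∑ j2 : ι, ∑ kk : ι, ∑ i : ι,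
      𝑺 ((a i * (((Sinv (a j2) * a kk) * x) * (b kk * (c * b j2)))) * b i)
    = 𝑺 c * ∑ i, 𝑺 ((a i * x) * b i) := by
  simp only [antipode_mul', hS2]
  have hc := conj_id a b Sinv hS1 hS2 hex1 hex2 hRunit (𝑺 c * ∑ kk, 𝑺 (b kk) * (𝑺 x * 𝑺 (a kk)))
  rw [← hc, sum_rot]
  refine Finset.sum_congr rfl fun i _ => Finset.sum_congr rfl fun j2 _ => ?_
  simp only [Finset.mul_sum, Finset.sum_mul]
  exact Finset.sum_congr rfl fun kk _ => by simp only [mul_assoc]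

lemma L2' (hS1 : ∀ x : A, Sinv (𝑺 x) = x) (hS2 : ∀ x : A, 𝑺 (Sinv x) = x)
    (hex1 : (∑ i, (Coalgebra.comul (R := k) (a i)) ⊗ₜ[k] b i : (A ⊗[k] A) ⊗[k] A)
        = (∑ i, (a i ⊗ₜ[k] (1:A)) ⊗ₜ[k] b i) * (∑ i, ((1:A) ⊗ₜ[k] a i) ⊗ₜ[k] b i))
    (hex2 : (∑ i, a i ⊗ₜ[k] (Coalgebra.comul (R := k) (b i)) : A ⊗[k] (A ⊗[k] A))
        = (∑ i, a i ⊗ₜ[k] ((1:A) ⊗ₜ[k] b i)) * (∑ i, a i ⊗ₜ[k] (b i ⊗ₜ[k] (1:A))))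
    (hRunit : IsUnit (∑ i, a i ⊗ₜ[k] b i)) (c x : A) :
    ∑ l : ι, ∑ m : ι, ∑ i : ι,
      𝑺 ((a i * (((Sinv (a l) * (Sinv c * a m)) * x) * (b m * b l))) * b i)
    = (∑ i, 𝑺 ((a i * x) * b i)) * c := by
  simp only [antipode_mul', hS2]
  have hc := conj_id a b Sinv hS1 hS2 hex1 hex2 hRunit ((∑ m, 𝑺 (b m) * (𝑺 x * 𝑺 (a m))) * c)
  rw [← hc, sum_rot]
  refine Finset.sum_congr rfl fun i _ => Finset.sum_congr rfl fun l _ => ?_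
  simp only [Finset.mul_sum, Finset.sum_mul]
  exact Finset.sum_congr rfl fun m _ => by simp only [mul_assoc]


end RMat

section Main
variable {ι : Type} [Fintype ι]

local notation "𝑺" => HopfAlgebra.antipode (R := k) (A := A)

/-- The map `(F ∘ S)^{⊗2} ∘ σ` intertwines the Lyubashenko operator
`Z(τ_d) : φ ⊗ ψ ↦ φ(? v'⁻¹) ⊗ ψ(S(v''⁻¹) ?)` with the `D`-twist operator
`v_D⁻¹ : φ ⊗ ψ ↦ φ(S⁻¹(aⱼ)a_k ? b_k v''⁻¹ bⱼ) ⊗ ψ(S⁻¹(a_l)S⁻¹(v'⁻¹)a_m ? b_m b_l)`. -/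
theorem FS_intertwines_D_twist
    [FiniteDimensional k A]
    (Sinv : A →ₗ[k] A)
    (hS1 : ∀ x : A, Sinv (HopfAlgebra.antipode (R := k) x) = x)
    (hS2 : ∀ x : A, HopfAlgebra.antipode (R := k) (Sinv x) = x)
    -- the R-matrix
    (ι : Type) [Fintype ι] (a b : ι → A)
    (hRunit : IsUnit (∑ i, a i ⊗ₜ[k] b i))
    (hIntertwine : ∀ x : A, (∑ i, a i ⊗ₜ[k] b i) * Coalgebra.comul x
        = (TensorProduct.comm k A A) (Coalgebra.comul x) * (∑ i, a i ⊗ₜ[k] b i))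
    (hex1 : (∑ i, (Coalgebra.comul (R := k) (a i)) ⊗ₜ[k] b i : (A ⊗[k] A) ⊗[k] A)
        = (∑ i, (a i ⊗ₜ[k] (1:A)) ⊗ₜ[k] b i) * (∑ i, ((1:A) ⊗ₜ[k] a i) ⊗ₜ[k] b i))
    (hex2 : (∑ i, a i ⊗ₜ[k] (Coalgebra.comul (R := k) (b i)) : A ⊗[k] (A ⊗[k] A))
        = (∑ i, a i ⊗ₜ[k] ((1:A) ⊗ₜ[k] b i)) * (∑ i, a i ⊗ₜ[k] (b i ⊗ₜ[k] (1:A))))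
    -- the ribbon element
    (v vinv : A) (hv : v * vinv = 1) (hv' : vinv * v = 1)
    (hvcentral : ∀ x : A, v * x = x * v)
    (hSv : HopfAlgebra.antipode (R := k) v = v)
    (hεv : Coalgebra.counit (R := k) v = 1)
    -- a Sweedler decomposition `Δ(v⁻¹) = ∑ⱼ v1 j ⊗ v2 j`, with
    -- `Δ(v⁻¹) = R'R (v⁻¹ ⊗ v⁻¹)`
    (κ : Type) (s : Finset κ) (v1 v2 : κ → A)
    (hΔvinv : Coalgebra.comul (R := k) vinv = ∑ j ∈ s, v1 j ⊗ₜ[k] v2 j)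
    (hΔvinv' : (∑ j ∈ s, v1 j ⊗ₜ[k] v2 j)
        = (∑ i, b i ⊗ₜ[k] a i) * (∑ i, a i ⊗ₜ[k] b i) * (vinv ⊗ₜ[k] vinv)) :
    -- the intertwining relation `(F∘S)^{⊗2} ∘ σ ∘ Z(τ_d) = v_D⁻¹ ∘ (F∘S)^{⊗2} ∘ σ`
    (TensorProduct.map
        ((∑ i, (conjMap (k := k) (a i) (b i)).dualMap)
          ∘ₗ (HopfAlgebra.antipode (R := k) (A := A)).dualMap)
        ((∑ i, (conjMap (k := k) (a i) (b i)).dualMap)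
          ∘ₗ (HopfAlgebra.antipode (R := k) (A := A)).dualMap))
      ∘ₗ (TensorProduct.comm k (Module.Dual k A) (Module.Dual k A)).toLinearMap
      ∘ₗ (∑ j ∈ s, TensorProduct.map
            ((LinearMap.mulRight k (v1 j)).dualMap)
            ((LinearMap.mulLeft k (HopfAlgebra.antipode (R := k) (v2 j))).dualMap))
    = (∑ j ∈ s, ∑ j2 : ι, ∑ kk : ι, ∑ l : ι, ∑ m : ι,
        TensorProduct.map
          ((conjMap (k := k) (Sinv (a j2) * a kk) (b kk * (v2 j * b j2))).dualMap)
          ((conjMap (k := k) (Sinv (a l) * (Sinv (v1 j) * a m)) (b m * b l)).dualMap))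
      ∘ₗ (TensorProduct.map
        ((∑ i, (conjMap (k := k) (a i) (b i)).dualMap)
          ∘ₗ (HopfAlgebra.antipode (R := k) (A := A)).dualMap)
        ((∑ i, (conjMap (k := k) (a i) (b i)).dualMap)
          ∘ₗ (HopfAlgebra.antipode (R := k) (A := A)).dualMap))
      ∘ₗ (TensorProduct.comm k (Module.Dual k A) (Module.Dual k A)).toLinearMap := by
  -- the kernel map G : x ↦ ∑ i, S (a i * x * b i)
  set G : A →ₗ[k] A := 𝑺 ∘ₗ (∑ i, conjMap (k := k) (a i) (b i)) with hGdef
  have hGapply : ∀ x : A, G x = ∑ i, 𝑺 ((a i * x) * b i) := by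
    intro x
    simp [hGdef, conjMap, LinearMap.sum_apply, map_sum]
  have hG1 : ∀ θ : Module.Dual k A,
      ((∑ i, (conjMap (k := k) (a i) (b i)).dualMap)
        ∘ₗ (HopfAlgebra.antipode (R := k) (A := A)).dualMap) θ = θ ∘ₗ G := by
    intro θ
    ext x
    simp [conjMap, hGdef, LinearMap.dualMap_apply, LinearMap.sum_apply, map_sum]
  apply TensorProduct.ext'
  intro φ ψ
  simp only [LinearMap.comp_apply, LinearMap.sum_apply, TensorProduct.map_tmul,
    LinearEquiv.coe_coe, TensorProduct.comm_tmul, map_sum, hG1, LinearMap.dualMap_apply']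
  -- now both sides are explicit sums
  refine Finset.sum_congr rfl fun j _ => ?_
  -- collapse the fourfold sum on the RHS into a pure tensor
  rw [show (∑ j2 : ι, ∑ kk : ι, ∑ l : ι, ∑ m : ι,
        ((ψ ∘ₗ G) ∘ₗ conjMap (k := k) (Sinv (a j2) * a kk) (b kk * (v2 j * b j2))) ⊗ₜ[k]
        ((φ ∘ₗ G) ∘ₗ conjMap (k := k) (Sinv (a l) * (Sinv (v1 j) * a m)) (b m * b l)))
      = (∑ j2 : ι, ∑ kk : ι,
          (ψ ∘ₗ G) ∘ₗ conjMap (k := k) (Sinv (a j2) * a kk) (b kk * (v2 j * b j2))) ⊗ₜ[k]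
        (∑ l : ι, ∑ m : ι,
          (φ ∘ₗ G) ∘ₗ conjMap (k := k) (Sinv (a l) * (Sinv (v1 j) * a m)) (b m * b l)) from by
    rw [TensorProduct.sum_tmul]
    refine Finset.sum_congr rfl fun j2 _ => ?_
    rw [TensorProduct.sum_tmul]
    refine Finset.sum_congr rfl fun kk _ => ?_
    rw [TensorProduct.tmul_sum]
    refine Finset.sum_congr rfl fun l _ => ?_
    rw [TensorProduct.tmul_sum]]
  -- now compare the two pure tensors leg by leg
  congr 1
  · ext x
    have inner : ∀ j2 kk : ι,
        G (conjMap (k := k) (Sinv (a j2) * a kk) (b kk * (v2 j * b j2)) x)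
        = ∑ i, 𝑺 ((a i * (((Sinv (a j2) * a kk) * x) * (b kk * (v2 j * b j2)))) * b i) := by
      intro j2 kk
      rw [show conjMap (k := k) (Sinv (a j2) * a kk) (b kk * (v2 j * b j2)) x
        = ((Sinv (a j2) * a kk) * x) * (b kk * (v2 j * b j2)) from rfl, hGapply]
    calc (((ψ ∘ₗ LinearMap.mulLeft k (𝑺 (v2 j))) ∘ₗ G)) x
        = ψ (𝑺 (v2 j) * G x) := rfl
      _ = ψ (∑ j2 : ι, ∑ kk : ι, ∑ i : ι,
            𝑺 ((a i * (((Sinv (a j2) * a kk) * x) * (b kk * (v2 j * b j2)))) * b i)) := by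
          rw [L1' a b Sinv hS1 hS2 hex1 hex2 hRunit (v2 j) x, ← hGapply]
      _ = ∑ j2 : ι, ∑ kk : ι, ψ (∑ i, 𝑺 ((a i *
            (((Sinv (a j2) * a kk) * x) * (b kk * (v2 j * b j2)))) * b i)) := by
          rw [map_sum]
          exact Finset.sum_congr rfl fun j2 _ => by rw [map_sum]
      _ = (∑ j2 : ι, ∑ kk : ι,
            (ψ ∘ₗ G) ∘ₗ conjMap (k := k) (Sinv (a j2) * a kk) (b kk * (v2 j * b j2))) x := by
          simp only [LinearMap.coe_sum, Finset.sum_apply, LinearMap.comp_apply]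
          exact Finset.sum_congr rfl fun j2 _ => Finset.sum_congr rfl fun kk _ => by
            rw [inner j2 kk]
  · ext x
    have inner : ∀ l m : ι,
        G (conjMap (k := k) (Sinv (a l) * (Sinv (v1 j) * a m)) (b m * b l) x)
        = ∑ i, 𝑺 ((a i * (((Sinv (a l) * (Sinv (v1 j) * a m)) * x) * (b m * b l))) * b i) := by
      intro l m
      rw [show conjMap (k := k) (Sinv (a l) * (Sinv (v1 j) * a m)) (b m * b l) x
        = ((Sinv (a l) * (Sinv (v1 j) * a m)) * x) * (b m * b l) from rfl, hGapply]
    calc (((φ ∘ₗ LinearMap.mulRight k (v1 j)) ∘ₗ G)) x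
        = φ (G x * v1 j) := rfl
      _ = φ (∑ l : ι, ∑ m : ι, ∑ i : ι,
            𝑺 ((a i * (((Sinv (a l) * (Sinv (v1 j) * a m)) * x) * (b m * b l))) * b i)) := by
          rw [L2' a b Sinv hS1 hS2 hex1 hex2 hRunit (v1 j) x, ← hGapply]
      _ = ∑ l : ι, ∑ m : ι, φ (∑ i, 𝑺 ((a i *
            (((Sinv (a l) * (Sinv (v1 j) * a m)) * x) * (b m * b l))) * b i)) := by
          rw [map_sum]
          exact Finset.sum_congr rfl fun l _ => by rw [map_sum]
      _ = (∑ l : ι, ∑ m : ι,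
            (φ ∘ₗ G) ∘ₗ conjMap (k := k) (Sinv (a l) * (Sinv (v1 j) * a m)) (b m * b l)) x := by
          simp only [LinearMap.coe_sum, Finset.sum_apply, LinearMap.comp_apply]
          exact Finset.sum_congr rfl fun l _ => Finset.sum_congr rfl fun m _ => by
            rw [inner l m]

end Main
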